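/- Fix K ≥ 1, reals r_1,…,r_K > 0 and q ∈ (0,1), and natural numbers n_1,…,n_K with total N = Σ_k n_k and r· = Σ_k r_k. Then ∏_{k=1}^K NB(n_k; r_k, q) = NB(N; r·, q) · DirMult(n_1,…,n_K; N, r_1,…,r_K), i.e. the joint pmf of K independent negative binomial variables with a common probability parameter factorizes as the negative binomial pmf of their sum times the Dirichlet-multinomial pmf of the vector given the sum. (This is the factorization underlying the paper's Lemma 2: conditioned on the total, independent NB(r_k, q) counts are Dirichlet-multinomial distributed.) -/

import Mathlib

open Finset

/-- The negative binomial pmf `NB(n; r, q) = Γ(r+n)/(n!·Γ(r))·(1−q)^r·q^n`. -/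
noncomputable def nbPmf (n : ℕ) (r q : ℝ) : ℝ :=
  Real.Gamma (r + n) / ((Nat.factorial n : ℝ) * Real.Gamma r) * Real.rpow (1 - q) r * q ^ n

/-- The Dirichlet-multinomial pmf
`DirMult(n; N, r) = (N!/∏ n_k!)·(Γ(r·)/Γ(r·+N))·∏ Γ(r_k+n_k)/Γ(r_k)` with `N = Σ n_k`. -/
noncomputable def dirMultPmf {K : ℕ} (n : Fin K → ℕ) (r : Fin K → ℝ) : ℝ :=
  ((Nat.factorial (∑ k, n k) : ℝ) / ∏ k, (Nat.factorial (n k) : ℝ)) *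
    (Real.Gamma (∑ k, r k) / Real.Gamma ((∑ k, r k) + (∑ k, n k : ℕ))) *
    ∏ k, Real.Gamma (r k + n k) / Real.Gamma (r k)

/-- Independent negative binomials with common probability parameter factorize as the
negative binomial of the total times the Dirichlet-multinomial of the vector given the total. -/
theorem stmt_1 (K : ℕ) (hK : 1 ≤ K) (r : Fin K → ℝ) (hr : ∀ k, 0 < r k)
    (q : ℝ) (hq0 : 0 < q) (hq1 : q < 1) (n : Fin K → ℕ) :
    ∏ k, nbPmf (n k) (r k) q = nbPmf (∑ k, n k) (∑ k, r k) q * dirMultPmf n r := by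
  have h1q : (0:ℝ) < 1 - q := by linarith
  have hΓr : ∀ k : Fin K, Real.Gamma (r k) ≠ 0 := fun k =>
    ne_of_gt (Real.Gamma_pos_of_pos (hr k))
  have hΓrn : ∀ k : Fin K, Real.Gamma (r k + n k) ≠ 0 := fun k =>
    ne_of_gt (Real.Gamma_pos_of_pos (add_pos_of_pos_of_nonneg (hr k) (Nat.cast_nonneg _)))
  have hsr : (0:ℝ) < ∑ k, r k := Finset.sum_pos (fun k _ => hr k) (by
    simpa [Finset.univ_nonempty_iff, ← Fin.pos_iff_nonempty] using Nat.lt_of_lt_of_le Nat.zero_lt_one hK)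
  have hΓsr : Real.Gamma (∑ k, r k) ≠ 0 := ne_of_gt (Real.Gamma_pos_of_pos hsr)
  have hΓsrn : Real.Gamma ((∑ k, r k) + (∑ k, n k : ℕ)) ≠ 0 :=
    ne_of_gt (Real.Gamma_pos_of_pos (add_pos_of_pos_of_nonneg hsr (Nat.cast_nonneg _)))
  have hfac : ∀ k : Fin K, ((n k).factorial : ℝ) ≠ 0 := fun k =>
    Nat.cast_ne_zero.mpr (n k).factorial_ne_zero
  have hfacN : ((∑ k, n k).factorial : ℝ) ≠ 0 :=
    Nat.cast_ne_zero.mpr (∑ k, n k).factorial_ne_zero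
  simp only [nbPmf, dirMultPmf, Real.rpow_eq_pow]
  rw [Finset.prod_mul_distrib, Finset.prod_mul_distrib,
    Finset.prod_pow_eq_pow_sum, ← Real.rpow_sum_of_pos h1q]
  rw [Finset.prod_div_distrib, Finset.prod_div_distrib, Finset.prod_mul_distrib]
  have hp1 : (∏ x : Fin K, ((n x).factorial : ℝ)) ≠ 0 :=
    Finset.prod_ne_zero_iff.mpr fun k _ => hfac k
  have hp2 : (∏ x : Fin K, Real.Gamma (r x)) ≠ 0 :=
    Finset.prod_ne_zero_iff.mpr fun k _ => hΓr k
  field_simp
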